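/- Let α ∈ ℝ and β ∈ ℂ with β ≠ 0, and set d = 1 + (i/2)α + (1/4)|β|². Define S_ee = d⁻¹(1 − (i/2)α − (1/4)|β|²), S_ei = d⁻¹(−iβ), S_ie = d⁻¹(−i·conj(β)), S_ii = d⁻¹(1 + (i/2)α − (1/4)|β|²) (the entries of the Cayley transform of the Stratonovich matrix [[α, β],[conj(β), 0]]). Then d ≠ 0, 1 − S_ii ≠ 0, and the feedback-reduced scattering coefficient satisfies S_ee + S_ei (1 − S_ii)⁻¹ S_ie = −1. -/

import Mathlib

/-- for the beam-splitter with Stratonovich matrix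
`[[α, β],[β̄, 0]]` (α real, β ≠ 0), the feedback network is well-posed
(`1 − S_ii ≠ 0`) and the feedback-reduced scattering coefficient is
`S_ee + S_ei (1 − S_ii)⁻¹ S_ie = −1`. -/
theorem beamsplitter_feedback_minus_one
    (α : ℝ) (β : ℂ) (hβ : β ≠ 0)
    (d : ℂ) (hd : d = 1 + (Complex.I / 2) * (α : ℂ) + (1 / 4) * (Complex.normSq β : ℂ))
    (See Sei Sie Sii : ℂ)
    (hSee : See = d⁻¹ * (1 - (Complex.I / 2) * (α : ℂ) - (1 / 4) * (Complex.normSq β : ℂ)))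
    (hSei : Sei = d⁻¹ * (-Complex.I * β))
    (hSie : Sie = d⁻¹ * (-Complex.I * (starRingEnd ℂ) β))
    (hSii : Sii = d⁻¹ * (1 + (Complex.I / 2) * (α : ℂ) - (1 / 4) * (Complex.normSq β : ℂ))) :
    d ≠ 0 ∧ 1 - Sii ≠ 0 ∧ See + Sei * (1 - Sii)⁻¹ * Sie = -1 := by
  have hnR : (0:ℝ) < Complex.normSq β := Complex.normSq_pos.mpr hβ
  have hn : (Complex.normSq β : ℂ) ≠ 0 := by exact_mod_cast ne_of_gt hnR
  have hd0 : d ≠ 0 := by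
    intro h
    have hre : d.re = 1 + (1/4) * Complex.normSq β := by
      rw [hd]; simp [Complex.add_re, Complex.mul_re, Complex.div_re]
    rw [h] at hre
    simp at hre
    nlinarith
  have hfac : 1 - Sii = d⁻¹ * ((1/2) * (Complex.normSq β : ℂ)) := by
    rw [hSii]
    field_simp
    rw [hd]; ring
  have h1S : 1 - Sii ≠ 0 := by
    rw [hfac]
    exact mul_ne_zero (inv_ne_zero hd0) (by simpa using hn)
  refine ⟨hd0, h1S, ?_⟩
  have hmc : β * (starRingEnd ℂ) β = (Complex.normSq β : ℂ) := Complex.mul_conj β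
  have hprod : (-Complex.I * β) * (-Complex.I * (starRingEnd ℂ) β)
      = -(Complex.normSq β : ℂ) := by
    linear_combination β * (starRingEnd ℂ) β * Complex.I_sq - hmc
  have hterm : Sei * (1 - Sii)⁻¹ * Sie = -2 * d⁻¹ := by
    rw [hSei, hSie, hfac, mul_inv, inv_inv]
    field_simp
    linear_combination hprod
  rw [hSee, hterm]
  field_simp
  rw [hd]; ring
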